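/- arXiv:2212.05460 — 4 statements merged into one kernel-verified Lean document; each statement's English description precedes it below -/
import Mathlib

section
/- Let A > 0 and suppose h is a real root of h^3 - A*h + (B - x) = 0 satisfying |B - x| > (2*sqrt(3)/9)*A^(3/2) (so h is the unique real root). Then h has the same sign as x - B, and h^2 - A > 0, i.e. h^2 > A. -/
/-- if h is the unique real root of h^3 - A h + (B-x) = 0 (i.e.
|B-x| > (2√3/9)A^(3/2)), then h has the same sign as x - B and h² > A. -/
theorem stmt2 (A B x h : ℝ) (hA : 0 < A)
    (hroot : h ^ 3 - A * h + (B - x) = 0)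
    (hBx : |B - x| > (2 * Real.sqrt 3 / 9) * A ^ ((3 : ℝ) / 2)) :
    (x - B) * h > 0 ∧ h ^ 2 - A > 0 := by
  have hApow : (A ^ ((3 : ℝ) / 2)) ^ 2 = A ^ 3 := by
    rw [← Real.rpow_natCast (A ^ ((3 : ℝ) / 2)) 2, ← Real.rpow_mul hA.le]
    norm_num
  have hs3 : Real.sqrt 3 ^ 2 = 3 := Real.sq_sqrt (by norm_num)
  have hApos : 0 < A ^ ((3 : ℝ) / 2) := Real.rpow_pos_of_pos hA _
  have hkey : h ^ 2 > A := by
    by_contra hle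
    push_neg at hle
    have h1 : ((2 * Real.sqrt 3 / 9) * A ^ ((3 : ℝ) / 2)) ^ 2 < |B - x| ^ 2 := by
      apply pow_lt_pow_left₀ hBx _ (by norm_num)
      positivity
    rw [sq_abs] at h1
    have h2 : (B - x) = A * h - h ^ 3 := by linarith
    have h3 : ((2 * Real.sqrt 3 / 9) * A ^ ((3 : ℝ) / 2)) ^ 2 = (4 / 27) * A ^ 3 := by
      rw [mul_pow, hApow]
      rw [div_pow, mul_pow, hs3]
      ring
    rw [h2, h3] at h1
    -- contradiction: 27 * h^2 * (A - h^2)^2 - 4A^3 = (3h^2 - A)^2 (3h^2 - 4A) ≤ 0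
    nlinarith [sq_nonneg (3 * h ^ 2 - A), sq_nonneg h, sq_nonneg (A - h ^ 2)]
  refine ⟨?_, by linarith⟩
  have hx : x - B = h * (h ^ 2 - A) := by linarith [hroot]; 
  rw [hx]
  have hh2 : 0 < h ^ 2 := lt_trans hA hkey
  nlinarith [hh2, hkey]
end

section
/- Let d > 0 and let A, c, h be real numbers with A ≥ 0, h ≠ 0, h^3 - A*h + c = 0, h^2 ≥ A, and suppose there are constants C1, C2 > 0 with C1 * d^(1/6) ≤ |h| ≤ C2 * d^(1/6) and c^2 + A^3 ≥ d. Then 3*h^2 - A ≥ (1/C2) * d^(1/3) * (c^2 + A^3)^(1/2) / d^(1/2) ≥ (1/C2) * d^(1/3). -/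
set_option maxHeartbeats 1000000 in
/-- lower bound 3h² - A ≥ (1/C2) d^(1/3) (c²+A³)^(1/2) / d^(1/2) ≥ (1/C2) d^(1/3). -/
theorem stmt4 (d A c h C1 C2 : ℝ) (hd : 0 < d) (hA : 0 ≤ A) (hh : h ≠ 0)
    (hC1 : 0 < C1) (hC2 : 0 < C2)
    (hroot : h ^ 3 - A * h + c = 0) (hsq : A ≤ h ^ 2)
    (hlow : C1 * d ^ ((1 : ℝ) / 6) ≤ |h|) (hup : |h| ≤ C2 * d ^ ((1 : ℝ) / 6))
    (hden : d ≤ c ^ 2 + A ^ 3) :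
    3 * h ^ 2 - A ≥
      (1 / C2) * d ^ ((1 : ℝ) / 3) * (c ^ 2 + A ^ 3) ^ ((1 : ℝ) / 2) / d ^ ((1 : ℝ) / 2) ∧
    (1 / C2) * d ^ ((1 : ℝ) / 3) * (c ^ 2 + A ^ 3) ^ ((1 : ℝ) / 2) / d ^ ((1 : ℝ) / 2) ≥
      (1 / C2) * d ^ ((1 : ℝ) / 3) := by
  have hd6 : (0:ℝ) < d ^ ((1:ℝ)/6) := Real.rpow_pos_of_pos hd _
  have hd2 : (0:ℝ) < d ^ ((1:ℝ)/2) := Real.rpow_pos_of_pos hd _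
  have hd3 : (0:ℝ) < d ^ ((1:ℝ)/3) := Real.rpow_pos_of_pos hd _
  have habs : 0 < |h| := abs_pos.mpr hh
  have hs : (0:ℝ) < c ^ 2 + A ^ 3 := lt_of_lt_of_le hd hden
  have hceq : c = -(h * (h ^ 2 - A)) := by linear_combination hroot
  have hc2 : c ^ 2 = h ^ 2 * (h ^ 2 - A) ^ 2 := by rw [hceq]; ring
  have hs2 : (c ^ 2 + A ^ 3) ^ ((1:ℝ)/2) = Real.sqrt (c ^ 2 + A ^ 3) :=
    (Real.sqrt_eq_rpow _).symm
  have hsqrt : Real.sqrt (c ^ 2 + A ^ 3) ≤ |h| * h ^ 2 := by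
    rw [show |h| * h ^ 2 = Real.sqrt ((|h| * h ^ 2) ^ 2) from
      (Real.sqrt_sq (by positivity)).symm]
    apply Real.sqrt_le_sqrt
    have hab := sq_abs h
    nlinarith [mul_le_mul_of_nonneg_left hsq hA, mul_nonneg hA (sub_nonneg.mpr hsq),
      sq_nonneg h, mul_le_mul_of_nonneg_left hsq (mul_nonneg hA hA)]
  have key : d ^ ((1:ℝ)/3) / d ^ ((1:ℝ)/2) = (d ^ ((1:ℝ)/6))⁻¹ := by
    rw [← Real.rpow_sub hd, show (1:ℝ)/3 - 1/2 = -(1/6) by norm_num, Real.rpow_neg hd.le]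
  have hrw : (1 / C2) * d ^ ((1:ℝ)/3) * (c ^ 2 + A ^ 3) ^ ((1:ℝ)/2) / d ^ ((1:ℝ)/2)
      = (c ^ 2 + A ^ 3) ^ ((1:ℝ)/2) / (C2 * d ^ ((1:ℝ)/6)) := by
    field_simp
    rw [show d ^ ((1:ℝ)/2) = d ^ ((1:ℝ)/3) * d ^ ((1:ℝ)/6) by
      rw [← Real.rpow_add hd]; norm_num]
  constructor
  · rw [hrw, ge_iff_le, div_le_iff₀ (by positivity)]
    calc (c ^ 2 + A ^ 3) ^ ((1:ℝ)/2) ≤ |h| * h ^ 2 := by rw [hs2]; exact hsqrt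
      _ ≤ (C2 * d ^ ((1:ℝ)/6)) * h ^ 2 :=
        mul_le_mul_of_nonneg_right hup (sq_nonneg h)
      _ ≤ (3 * h ^ 2 - A) * (C2 * d ^ ((1:ℝ)/6)) :=
        by
        have h1 : (0:ℝ) ≤ C2 * d ^ ((1:ℝ)/6) := by positivity
        nlinarith [mul_le_mul_of_nonneg_left
          (show h ^ 2 ≤ 3 * h ^ 2 - A by nlinarith [sq_nonneg h]) h1]
  · rw [ge_iff_le, le_div_iff₀ hd2]
    have hle : d ^ ((1:ℝ)/2) ≤ (c ^ 2 + A ^ 3) ^ ((1:ℝ)/2) :=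
      Real.rpow_le_rpow hd.le hden (by norm_num)
    calc (1 / C2) * d ^ ((1:ℝ)/3) * d ^ ((1:ℝ)/2)
        ≤ (1 / C2) * d ^ ((1:ℝ)/3) * (c ^ 2 + A ^ 3) ^ ((1:ℝ)/2) :=
          mul_le_mul_of_nonneg_left hle (by positivity)
end

section
/- Under the assumptions of the monotonicity lemma (Q' ≤ -C0 ε R + C1 ε² R L, L' ≤ C1 ε R, all functions nonnegative, ε ≤ 1), if additionally Q(t0) ≤ (ε/2)*L(t0)^2 and C1*ε*L(t0) ≤ C0/3 and L(t) ≤ 2C0/(3C1) on [t0,t1], then L(t) ≤ (3/2)*L(t0) for all t in [t0, t1]. -/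
/-- under the monotonicity assumptions together with
Q(t0) ≤ (ε/2)L(t0)² and C₁εL(t0) ≤ C₀/3, one gets L(t) ≤ (3/2)L(t0). -/
theorem stmt8 (t0 t1 C0 C1 ε : ℝ) (ht : t0 < t1) (hC0 : 0 < C0) (hC1 : 0 < C1)
    (hε : 0 < ε) (hε1 : ε ≤ 1)
    (L Q R L' Q' : ℝ → ℝ)
    (hLc : ContinuousOn L (Set.Icc t0 t1)) (hQc : ContinuousOn Q (Set.Icc t0 t1))
    (hRc : ContinuousOn R (Set.Icc t0 t1))
    (hLpos : ∀ t ∈ Set.Icc t0 t1, 0 ≤ L t)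
    (hQpos : ∀ t ∈ Set.Icc t0 t1, 0 ≤ Q t)
    (hRpos : ∀ t ∈ Set.Icc t0 t1, 0 ≤ R t)
    (hQd : ∀ t ∈ Set.Icc t0 t1, HasDerivWithinAt Q (Q' t) (Set.Icc t0 t1) t)
    (hLd : ∀ t ∈ Set.Icc t0 t1, HasDerivWithinAt L (L' t) (Set.Icc t0 t1) t)
    (hQ' : ∀ t ∈ Set.Icc t0 t1, Q' t ≤ -C0 * ε * R t + C1 * ε ^ 2 * R t * L t)
    (hL' : ∀ t ∈ Set.Icc t0 t1, L' t ≤ C1 * ε * R t)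
    (hLb : ∀ t ∈ Set.Icc t0 t1, L t ≤ 2 * C0 / (3 * C1))
    (hQ0 : Q t0 ≤ ε / 2 * (L t0) ^ 2)
    (hL0 : C1 * ε * L t0 ≤ C0 / 3) :
    ∀ t ∈ Set.Icc t0 t1, L t ≤ 3 / 2 * L t0 := by
  set F : ℝ → ℝ := fun t => 3 * C1 * Q t + C0 * L t with hF
  have hFc : ContinuousOn F (Set.Icc t0 t1) :=
    (continuousOn_const.mul hQc).add (continuousOn_const.mul hLc)
  have hFd : ∀ t ∈ Set.Ioo t0 t1, HasDerivAt F (3 * C1 * Q' t + C0 * L' t) t := by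
    intro t htm
    have htmem : t ∈ Set.Icc t0 t1 := Set.Ioo_subset_Icc_self htm
    have hnhds : Set.Icc t0 t1 ∈ nhds t := Icc_mem_nhds htm.1 htm.2
    exact (((hQd t htmem).hasDerivAt hnhds).const_mul (3 * C1)).add
      (((hLd t htmem).hasDerivAt hnhds).const_mul C0)
  have hanti : AntitoneOn F (Set.Icc t0 t1) := by
    apply antitoneOn_of_deriv_nonpos (convex_Icc t0 t1) hFc
    · rw [interior_Icc]
      exact fun t htm => (hFd t htm).differentiableAt.differentiableWithinAt
    · rw [interior_Icc]
      intro t htm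
      have htmem : t ∈ Set.Icc t0 t1 := Set.Ioo_subset_Icc_self htm
      rw [(hFd t htm).deriv]
      have h1 := hQ' t htmem
      have h2 := hL' t htmem
      have h3 := hLb t htmem
      have h4 := hRpos t htmem
      have h5 : 3 * C1 * (ε * L t) ≤ 2 * C0 := by
        have : L t * (3 * C1) ≤ 2 * C0 / (3 * C1) * (3 * C1) := by
          apply mul_le_mul_of_nonneg_right h3; positivity
        rw [div_mul_cancel₀] at this
        · nlinarith [hLpos t htmem]
        · positivity
      nlinarith [mul_le_mul_of_nonneg_left h1 (by positivity : (0:ℝ) ≤ 3 * C1),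
        mul_le_mul_of_nonneg_left h2 hC0.le, mul_nonneg (mul_nonneg hC1.le hε.le)
          (mul_nonneg h4 (sub_nonneg.2 h5))]
  intro t htmem
  have ht0 : t0 ∈ Set.Icc t0 t1 := Set.left_mem_Icc.2 ht.le
  have hFt := hanti ht0 htmem htmem.1
  have hL0pos := hLpos t0 ht0
  simp only [hF] at hFt
  nlinarith [mul_le_mul_of_nonneg_left hQ0 (by positivity : (0:ℝ) ≤ 3 * C1),
    mul_le_mul_of_nonneg_left hL0 hL0pos, mul_nonneg (by positivity : (0:ℝ) ≤ 3 * C1) (hQpos t htmem)]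
end

section
/- Let y(t) = y0 + k0*sqrt(t-T) + O(t-T) with k0 > 0 for t > T near T, and let φ be C³ with ∂_y φ(y0,T) = 0, ∂²_y φ(y0,T) = 0, ∂²_{yt} φ(y0,T) = -1, ∂³_y φ(y0,T) = 6. Then ∂_y φ(y(t), t) = (3*k0^2 - 1)*(t-T) + o(t-T) as t → T+; in particular if k0 > 1/sqrt(3), then ∂_y φ(y(t), t) > 0 for t sufficiently close to T from above. -/
open Filter Topology Asymptotics

/-- along y(t) = y0 + k0√(t-T) + O(t-T), the derivative
∂_y φ(y(t), t) equals (3k0² - 1)(t-T) + o(t-T); if k0 > 1/√3 it is eventually positive. -/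
theorem stmt15 (y0 T k0 : ℝ) (hk0 : 0 < k0) (φ : ℝ → ℝ → ℝ) (y : ℝ → ℝ)
    (hφ : ContDiff ℝ 3 (fun p : ℝ × ℝ => φ p.1 p.2))
    (h1 : deriv (fun y' => φ y' T) y0 = 0)
    (h2 : iteratedDeriv 2 (fun y' => φ y' T) y0 = 0)
    (h3 : deriv (fun t => deriv (fun y' => φ y' t) y0) T = -1)
    (h4 : iteratedDeriv 3 (fun y' => φ y' T) y0 = 6)
    (hy : ∃ C : ℝ, ∀ᶠ t in 𝓝[>] T, |y t - y0 - k0 * Real.sqrt (t - T)| ≤ C * (t - T)) :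
    (fun t => deriv (fun y' => φ y' t) (y t) - (3 * k0 ^ 2 - 1) * (t - T))
      =o[𝓝[>] T] (fun t => t - T) ∧
    (1 / Real.sqrt 3 < k0 → ∀ᶠ t in 𝓝[>] T, 0 < deriv (fun y' => φ y' t) (y t)) := by
  set Φ : ℝ × ℝ → ℝ := fun p => φ p.1 p.2 with hΦdef
  set ψ : ℝ × ℝ → ℝ := fun p => fderiv ℝ Φ p ((1:ℝ),(0:ℝ)) with hψdef
  have hψC2 : ContDiff ℝ 2 ψ :=
    (ContinuousLinearMap.apply ℝ ℝ ((1:ℝ),(0:ℝ))).contDiff.comp (hφ.fderiv_right (by norm_num))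
  have key : ∀ t a, deriv (fun y' => φ y' t) a = ψ (a, t) := by
    intro t a
    have hd := ((hφ.differentiable (by norm_num)).differentiableAt (x := (a, t))).hasFDerivAt
    exact (hd.comp_hasDerivAt a ((hasDerivAt_id a).prodMk (hasDerivAt_const a t))).deriv
  set g : ℝ → ℝ := fun a => ψ (a, T) with hgdef
  have hgC2 : ContDiff ℝ 2 g := hψC2.comp (contDiff_id.prodMk contDiff_const)
  have hderiv_eq : deriv (fun y' => φ y' T) = g := funext fun a => key T a
  have hg0 : g y0 = 0 := (key T y0).symm.trans h1
  have hg1 : deriv g y0 = 0 := by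
    rw [show (2:ℕ) = 1 + 1 from rfl, iteratedDeriv_succ, iteratedDeriv_one, hderiv_eq] at h2
    exact h2
  have hg2 : deriv (deriv g) y0 = 6 := by
    rw [show (3:ℕ) = 1 + 1 + 1 from rfl, iteratedDeriv_succ, iteratedDeriv_succ,
      iteratedDeriv_one, hderiv_eq] at h4
    exact h4
  set ψt : ℝ × ℝ → ℝ := fun p => fderiv ℝ ψ p ((0:ℝ),(1:ℝ)) with hψtdef
  have hψt_cont : Continuous ψt :=
    (ContinuousLinearMap.apply ℝ ℝ ((0:ℝ),(1:ℝ))).continuous.comp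
      ((show ContDiff ℝ 1 (fderiv ℝ ψ) from hψC2.fderiv_right (by norm_num)).continuous)
  have keyt : ∀ a t, HasDerivAt (fun s => ψ (a, s)) (ψt (a, t)) t := by
    intro a t
    have hd := ((hψC2.differentiable (by norm_num)).differentiableAt (x := (a, t))).hasFDerivAt
    exact hd.comp_hasDerivAt t ((hasDerivAt_const t a).prodMk (hasDerivAt_id t))
  have hψt0 : ψt (y0, T) = -1 := by
    have he : (fun t => deriv (fun y' => φ y' t) y0) = fun s => ψ (y0, s) :=
      funext fun t => key t y0
    rw [he, (keyt y0 T).deriv] at h3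
    exact h3
  obtain ⟨C, hC⟩ := hy
  have hτ_pos : ∀ᶠ t in 𝓝[>] T, 0 < t - T := by
    filter_upwards [self_mem_nhdsWithin] with t ht
    exact sub_pos.mpr ht
  have hτ0 : Tendsto (fun t => t - T) (𝓝[>] T) (𝓝 0) := by
    have h : Tendsto (fun t : ℝ => t - T) (𝓝 T) (𝓝 (T - T)) := (continuousAt_id.sub continuousAt_const)
    simpa using h.mono_left nhdsWithin_le_nhds
  have hsqrt0 : Tendsto (fun t => Real.sqrt (t - T)) (𝓝[>] T) (𝓝 0) := by
    have := (Real.continuous_sqrt.tendsto 0).comp hτ0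
    simpa [Function.comp_def] using this
  have hC_nn : 0 ≤ C := by
    obtain ⟨t, ht, htp⟩ := (hC.and hτ_pos).exists
    nlinarith [abs_nonneg (y t - y0 - k0 * Real.sqrt (t - T))]
  have hy_tendsto : Tendsto y (𝓝[>] T) (𝓝 y0) := by
    have h0 : Tendsto (fun t => y t - y0) (𝓝[>] T) (𝓝 0) := by
      apply squeeze_zero_norm' (a := fun t => k0 * Real.sqrt (t - T) + C * (t - T))
      · filter_upwards [hC, hτ_pos] with t ht htp
        have h1' : y t - y0 = (y t - y0 - k0 * Real.sqrt (t - T)) + k0 * Real.sqrt (t - T) := by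
          ring
        rw [Real.norm_eq_abs, h1']
        refine (abs_add_le _ _).trans ?_
        rw [abs_of_nonneg (by positivity : (0:ℝ) ≤ k0 * Real.sqrt (t - T))]
        linarith
      · simpa using (hsqrt0.const_mul k0).add (hτ0.const_mul C)
    have := h0.add_const y0
    simpa using this
  -- Fact 1
  have fact1 : (fun t => (y t - y0)^2 - k0^2 * (t - T)) =o[𝓝[>] T] (fun t => t - T) := by
    rw [isLittleO_iff]
    intro ε hε
    have hb : Tendsto (fun t => 2*k0*C*Real.sqrt (t-T) + C^2*(t-T)) (𝓝[>] T) (𝓝 0) := by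
      simpa using (hsqrt0.const_mul (2*k0*C)).add (hτ0.const_mul (C^2))
    filter_upwards [hC, hτ_pos, hb.eventually_lt_const hε] with t ht htp hbt
    have hs2 : Real.sqrt (t - T) ^ 2 = t - T := Real.sq_sqrt htp.le
    have hs_nn : 0 ≤ Real.sqrt (t - T) := Real.sqrt_nonneg _
    set s := Real.sqrt (t - T) with hsdef
    set e := y t - y0 - k0 * s with hedef
    have key2 : (y t - y0)^2 - k0^2*(t - T) = 2*k0*s*e + e^2 := by
      linear_combination k0^2 * hs2
    rw [Real.norm_eq_abs, Real.norm_eq_abs, key2, abs_of_pos htp]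
    have habs1 : |2*k0*s*e + e^2| ≤ 2*k0*s*|e| + |e|^2 := by
      calc |2*k0*s*e + e^2| ≤ |2*k0*s*e| + |e^2| := abs_add_le _ _
        _ = 2*k0*s*|e| + |e|^2 := by
            rw [abs_mul (2*k0*s) e, abs_of_nonneg (show (0:ℝ) ≤ 2*k0*s by positivity),
              abs_of_nonneg (sq_nonneg e), sq_abs]
    have h1' : 2*k0*s*|e| ≤ 2*k0*s*(C*(t-T)) :=
      mul_le_mul_of_nonneg_left ht (by positivity)
    have h2' : |e|^2 ≤ (C*(t-T))^2 := by
      have := mul_self_le_mul_self (abs_nonneg e) ht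
      simpa [pow_two] using this
    have h3' : (2*k0*C*s + C^2*(t-T)) * (t-T) < ε * (t-T) :=
      mul_lt_mul_of_pos_right hbt htp
    nlinarith [hs2, hs_nn]
  -- Fact 1 big-O
  have fact1O : (fun t => (y t - y0)^2) =O[𝓝[>] T] (fun t => t - T) := by
    have h2' : (fun t : ℝ => k0^2 * (t - T)) =O[𝓝[>] T] (fun t => t - T) :=
      (isBigO_refl _ _).const_mul_left _
    have := fact1.isBigO.add h2'
    simpa using this
  -- Fact 2: one-dimensional Taylor of g at y0
  have fact2 : (fun a => g a - 3*(a - y0)^2) =o[𝓝 y0] (fun a => (a - y0)^2) := by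
    have hdg' : ContDiff ℝ 1 (deriv g) := by
      have h' := contDiff_succ_iff_deriv.mp (show ContDiff ℝ (1+1) g by norm_num; exact hgC2)
      exact h'.2.2
    have hdg : HasDerivAt (deriv g) 6 y0 := hg2 ▸ (hdg'.differentiable (by norm_num) y0).hasDerivAt
    rw [isLittleO_iff]
    intro ε hε
    have hsmall : ∀ᶠ x in 𝓝 y0, ‖deriv g x - 6*(x - y0)‖ ≤ ε * ‖x - y0‖ := by
      have h := hasDerivAt_iff_isLittleO.mp hdg
      rw [isLittleO_iff] at h
      filter_upwards [h hε] with x hx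
      have : deriv g x - deriv g y0 - (x - y0) • (6:ℝ) = deriv g x - 6*(x - y0) := by
        rw [hg1, smul_eq_mul]; ring
      rwa [this] at hx
    rw [Metric.eventually_nhds_iff] at hsmall
    obtain ⟨δ, hδ, hball⟩ := hsmall
    rw [Metric.eventually_nhds_iff]
    refine ⟨δ, hδ, fun a ha => ?_⟩
    have hmvt := Convex.norm_image_sub_le_of_norm_hasDerivWithin_le
      (f := fun x => g x - 3*(x - y0)^2) (f' := fun x => deriv g x - 6*(x - y0))
      (s := Set.uIcc y0 a) (C := ε * |a - y0|) (x := y0) (y := a)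
      (fun x _ => by
        have hgx : HasDerivAt g (deriv g x) x := (hgC2.differentiable (by norm_num) x).hasDerivAt
        have hpx : HasDerivAt (fun x => 3*(x - y0)^2) (6*(x - y0)) x := by
          have := (((hasDerivAt_id x).sub_const y0).fun_pow 2).const_mul (3:ℝ)
          exact this.congr_deriv (by rw [show (2:ℕ) - 1 = 1 from rfl]; simp only [id]; push_cast; ring)
        exact (hgx.sub hpx).hasDerivWithinAt)
      (fun x hx => by
        have hx1 : |x - y0| ≤ |a - y0| := Set.abs_sub_left_of_mem_uIcc hx
        have hx2 : dist x y0 < δ := by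
          rw [Real.dist_eq]
          exact lt_of_le_of_lt hx1 (by rwa [Real.dist_eq] at ha)
        have := hball hx2
        calc ‖deriv g x - 6*(x - y0)‖ ≤ ε * ‖x - y0‖ := this
          _ ≤ ε * |a - y0| := by
              rw [Real.norm_eq_abs]
              exact mul_le_mul_of_nonneg_left hx1 hε.le)
      (convex_uIcc _ _) Set.left_mem_uIcc Set.right_mem_uIcc
    have hval : (fun x => g x - 3*(x - y0)^2) a - (fun x => g x - 3*(x - y0)^2) y0
        = g a - 3*(a - y0)^2 := by simp [hg0]
    rw [hval] at hmvt
    calc ‖g a - 3*(a - y0)^2‖ ≤ ε * |a - y0| * ‖a - y0‖ := hmvt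
      _ = ε * ‖(a - y0)^2‖ := by
          rw [Real.norm_eq_abs, Real.norm_eq_abs, abs_of_nonneg (sq_nonneg (a - y0))]
          rw [pow_two, ← abs_mul_abs_self (a - y0)]; ring
  have fact2y : (fun t => g (y t) - 3*(y t - y0)^2) =o[𝓝[>] T] (fun t => t - T) := by
    have h := fact2.comp_tendsto hy_tendsto
    have h' : (fun t => g (y t) - 3*(y t - y0)^2) =o[𝓝[>] T] (fun t => (y t - y0)^2) := by
      simpa [Function.comp_def] using h
    exact h'.trans_isBigO fact1O
  -- Fact 3
  have fact3 : (fun t => ψ (y t, t) - g (y t) + (t - T)) =o[𝓝[>] T] (fun t => t - T) := by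
    rw [isLittleO_iff]
    intro ε hε
    have hev : ∀ᶠ p : ℝ×ℝ in 𝓝 (y0, T), |ψt p + 1| < ε := by
      have hc2 : ContinuousAt (fun p : ℝ×ℝ => |ψt p + 1|) (y0, T) :=
        (hψt_cont.continuousAt.add continuousAt_const).abs
      have h0 : |ψt (y0, T) + 1| = 0 := by rw [hψt0]; norm_num
      have ht := hc2.tendsto
      rw [h0] at ht
      exact ht.eventually_lt_const hε
    rw [Metric.eventually_nhds_iff] at hev
    obtain ⟨δ, hδ, hball⟩ := hev
    have hyev : ∀ᶠ t in 𝓝[>] T, dist (y t) y0 < δ := Metric.tendsto_nhds.mp hy_tendsto δ hδ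
    have hτev : ∀ᶠ t in 𝓝[>] T, t - T < δ := hτ0.eventually_lt_const hδ
    filter_upwards [hyev, hτev, hτ_pos] with t hyt hτt hτp
    have hmvt := Convex.norm_image_sub_le_of_norm_hasDerivWithin_le
      (f := fun s => ψ (y t, s) + s) (f' := fun s => ψt (y t, s) + 1)
      (s := Set.Icc T t) (C := ε) (x := T) (y := t)
      (fun s _ => ((keyt (y t) s).add (hasDerivAt_id s)).hasDerivWithinAt)
      (fun s hs => by
        have hd : dist ((y t, s) : ℝ × ℝ) (y0, T) < δ := by
          rw [Prod.dist_eq]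
          refine max_lt hyt ?_
          rw [Real.dist_eq, abs_of_nonneg (by linarith [hs.1] : (0:ℝ) ≤ s - T)]
          linarith [hs.2]
        exact (hball hd).le)
      (convex_Icc _ _) (Set.left_mem_Icc.mpr (by linarith)) (Set.right_mem_Icc.mpr (by linarith))
    have hval : (fun s => ψ (y t, s) + s) t - (fun s => ψ (y t, s) + s) T
        = ψ (y t, t) - g (y t) + (t - T) := by simp [hgdef]; ring
    rw [hval] at hmvt
    simpa using hmvt
  -- combine
  have main : (fun t => ψ (y t, t) - (3 * k0 ^ 2 - 1) * (t - T)) =o[𝓝[>] T] (fun t => t - T) := by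
    have hsum := (fact3.add fact2y).add (fact1.const_mul_left 3)
    have heq : (fun t => ψ (y t, t) - (3 * k0 ^ 2 - 1) * (t - T)) =
        fun t => ((ψ (y t, t) - g (y t) + (t - T)) + (g (y t) - 3*(y t - y0)^2))
          + 3*((y t - y0)^2 - k0^2*(t - T)) := by
      funext t; ring
    rw [heq]
    exact hsum
  constructor
  · simpa only [key] using main
  · intro hk
    have h3pos : (0:ℝ) < Real.sqrt 3 := Real.sqrt_pos.mpr (by norm_num)
    have hsq : (1 / Real.sqrt 3)^2 = 1/3 := by
      rw [div_pow, one_pow, Real.sq_sqrt (by norm_num : (0:ℝ) ≤ 3)]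
    have hk2 : 1/3 < k0^2 := by
      rw [← hsq]
      exact pow_lt_pow_left₀ hk (by positivity) (by norm_num)
    have hc : 0 < 3 * k0 ^ 2 - 1 := by linarith
    have hev := (isLittleO_iff.mp main) (show (0:ℝ) < (3 * k0 ^ 2 - 1)/2 by linarith)
    filter_upwards [hev, hτ_pos] with t ht hτp
    rw [key]
    rw [Real.norm_eq_abs, Real.norm_eq_abs, abs_of_pos hτp] at ht
    have := (abs_le.mp ht).1
    nlinarith
end
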